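/- Let ℛ and ℛ' be transfer systems on a finite group G, with ℛ' saturated. Then ℛ ⊆ ℛ' if and only if every ℛ'-cofibrant subgroup of G is ℛ-cofibrant. -/

import Mathlib

open scoped Classical

/-- The character group of `G`: monoid homomorphisms to `ℂˣ`. -/
abbrev CharGp (G : Type*) [Group G] := G →* ℂˣ

/-- Complex conjugation acting on characters: `χ ↦ χ̄`. -/
noncomputable def charConj {G : Type*} [Group G] (χ : CharGp G) : CharGp G :=
  (Units.map (starRingEnd ℂ).toMonoidHom).comp χ

/-- Restriction of characters along an inclusion of subgroups: `R_K^H` on elements. -/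
def resChar {G : Type*} [Group G] {K H : Subgroup G} (h : K ≤ H) (χ : CharGp H) : CharGp K :=
  χ.comp (Subgroup.inclusion h)

/-- Restriction of a character of `G` itself to a subgroup. -/
def resCharTop {G : Type*} [Group G] (K : Subgroup G) (χ : CharGp G) : CharGp K :=
  χ.comp K.subtype

/-- A transfer system on a finite group `G`: a partial order on subgroups refining
inclusion, closed under conjugation and under intersection-pullback. -/
structure TransferSystem (G : Type*) [Group G] where
  rel : Subgroup G → Subgroup G → Prop
  le_of_rel : ∀ {K H : Subgroup G}, rel K H → K ≤ H
  refl : ∀ H : Subgroup G, rel H H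
  trans : ∀ {K L H : Subgroup G}, rel K L → rel L H → rel K H
  conj : ∀ {K H : Subgroup G} (g : G), rel K H →
    rel (K.map (MulAut.conj g).toMonoidHom) (H.map (MulAut.conj g).toMonoidHom)
  inf_rel : ∀ {K H : Subgroup G} (L : Subgroup G), rel K H → L ≤ H → rel (K ⊓ L) L

/-- A transfer system is saturated if `(K,H) ∈ ℛ` and `K ≤ L ≤ H` imply `(L,H) ∈ ℛ`. -/
def TransferSystem.Saturated {G : Type*} [Group G] (R : TransferSystem G) : Prop :=
  ∀ ⦃K L H : Subgroup G⦄, R.rel K H → K ≤ L → L ≤ H → R.rel L H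

/-- A subgroup `H` is `ℛ`-cofibrant if there is no proper `K < H` with `(K,H) ∈ ℛ`. -/
def TransferSystem.Cofibrant {G : Type*} [Group G] (R : TransferSystem G)
    (H : Subgroup G) : Prop :=
  ¬ ∃ K : Subgroup G, K < H ∧ R.rel K H

/-- `𝒰_G`: subsets of `Ĝ` containing the trivial character and closed under conjugation. -/
def UnivSet (G : Type*) [Group G] : Set (Set (CharGp G)) :=
  {U | (1 : CharGp G) ∈ U ∧ ∀ χ ∈ U, charConj χ ∈ U}

/-- `Tr(U)`: the relation `{(K,H) : K ≤ H and I_K^H(R_K^G(U)) ⊆ R_H^G(U)}`. -/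
def TrRel {G : Type*} [Group G] (U : Set (CharGp G)) (K H : Subgroup G) : Prop :=
  ∃ h : K ≤ H, resChar h ⁻¹' (resCharTop K '' U) ⊆ resCharTop H '' U

/-- **Lemma (cofibrant subgroups determine a saturated transfer system).**
Let `ℛ, ℛ'` be transfer systems on a finite group `G` with `ℛ'` saturated. Then
`ℛ ⊆ ℛ'` iff every `ℛ'`-cofibrant subgroup is `ℛ`-cofibrant. -/
theorem subset_iff_cofibrant (G : Type*) [Group G] [Finite G]
    (R R' : TransferSystem G) (hR' : R'.Saturated) :
    (∀ K H : Subgroup G, R.rel K H → R'.rel K H) ↔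
      (∀ H : Subgroup G, R'.Cofibrant H → R.Cofibrant H) := by
  constructor
  · intro h H hH'
    rintro ⟨K, hKH, hrel⟩
    exact hH' ⟨K, hKH, h K H hrel⟩
  · intro hcof
    have card_lt : ∀ {L H : Subgroup G}, L < H → Nat.card L < Nat.card H := by
      intro L H hLH
      have : (L : Set G) ⊂ (H : Set G) := by exact_mod_cast hLH
      have h := Set.ncard_strictMono this
      rw [← Nat.card_coe_set_eq, ← Nat.card_coe_set_eq] at h
      exact h
    have main : ∀ n, ∀ H : Subgroup G, Nat.card H ≤ n → ∀ K, R.rel K H → R'.rel K H := by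
      intro n
      induction n with
      | zero =>
        intro H hH
        have := Nat.card_pos (α := H)
        omega
      | succ n ih =>
        intro H hH K hKH
        rcases lt_or_eq_of_le (R.le_of_rel hKH) with hlt | heq
        · have hnotcof : ¬ R.Cofibrant H := fun hc => hc ⟨K, hlt, hKH⟩
          have hnot' : ¬ R'.Cofibrant H := fun hc => hnotcof (hcof H hc)
          obtain ⟨L, hLH, hL⟩ := not_not.mp hnot'
          have h1 : R.rel (K ⊓ L) L := R.inf_rel L hKH hLH.le
          have h2 : R'.rel (K ⊓ L) L := by
            apply ih L _ _ h1
            have := card_lt hLH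
            omega
          have h3 : R'.rel (K ⊓ L) H := R'.trans h2 hL
          exact hR' h3 inf_le_left (R.le_of_rel hKH)
        · subst heq
          exact R'.refl K
    exact fun K H hKH => main (Nat.card H) H le_rfl K hKH
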